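/- arXiv:2502.05876 — 2 statements merged into one kernel-verified Lean document; each statement's English description precedes it below -/
import Mathlib

section
/- Let 0 < α < 1, η(β) = √2 · arctanh(√(1 - e^{-β})), Λ(β) = (1-α)^{-2} e^{-β} η(β)², and let β₁ be the unique positive root of √(1-e^{-β}) arctanh(√(1-e^{-β})) = 1. Then Λ'(β) > 0 for 0 < β < β₁, Λ'(β₁) = 0, and Λ'(β) < 0 for β > β₁. -/
noncomputable def artanh (x : ℝ) : ℝ := (1 / 2) * Real.log ((1 + x) / (1 - x))

noncomputable def eta (β : ℝ) : ℝ := Real.sqrt 2 * artanh (Real.sqrt (1 - Real.exp (-β)))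

noncomputable def Lam (α β : ℝ) : ℝ := (1 - α) ^ (-2 : ℤ) * Real.exp (-β) * (eta β) ^ 2

lemma exp_neg_lt_one {β : ℝ} (hβ : 0 < β) : Real.exp (-β) < 1 := by
  rw [Real.exp_lt_one_iff]; linarith

lemma artanh_pos {x : ℝ} (h0 : 0 < x) (h1 : x < 1) : 0 < artanh x := by
  unfold artanh
  have : (1:ℝ) < (1 + x) / (1 - x) := by
    rw [lt_div_iff₀ (by linarith)]; linarith
  have := Real.log_pos this
  linarith

lemma artanh_strict {x y : ℝ} (h0 : 0 ≤ x) (hxy : x < y) (h1 : y < 1) :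
    artanh x < artanh y := by
  unfold artanh
  have hx1 : (0:ℝ) < 1 - x := by linarith
  have hy1 : (0:ℝ) < 1 - y := by linarith
  have hfrac : (1 + x) / (1 - x) < (1 + y) / (1 - y) := by
    rw [div_lt_div_iff₀ hx1 hy1]; nlinarith
  have hpos : (0:ℝ) < (1 + x) / (1 - x) := by positivity
  have := Real.log_lt_log hpos hfrac
  linarith

lemma hasDerivAt_artanh {x : ℝ} (h0 : -1 < x) (h1 : x < 1) :
    HasDerivAt artanh (1 / (1 - x ^ 2)) x := by
  have hx1 : (0:ℝ) < 1 + x := by linarith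
  have hx2 : (0:ℝ) < 1 - x := by linarith
  have hl1 : HasDerivAt (fun y : ℝ => Real.log (1 + y)) (1 / (1 + x)) x := by
    have h : HasDerivAt (fun y : ℝ => 1 + y) 1 x := (hasDerivAt_id x).const_add 1
    simpa using h.log (ne_of_gt hx1)
  have hl2 : HasDerivAt (fun y : ℝ => Real.log (1 - y)) (-1 / (1 - x)) x := by
    have h : HasDerivAt (fun y : ℝ => 1 - y) (-1) x := (hasDerivAt_id x).const_sub 1
    simpa using h.log (ne_of_gt hx2)
  have hg : HasDerivAt (fun y : ℝ => (1/2 : ℝ) * (Real.log (1 + y) - Real.log (1 - y)))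
      ((1/2 : ℝ) * (1 / (1 + x) - -1 / (1 - x))) x := (hl1.sub hl2).const_mul _
  have hev : (fun y : ℝ => (1/2 : ℝ) * (Real.log (1 + y) - Real.log (1 - y))) =ᶠ[nhds x] artanh := by
    filter_upwards [Ioo_mem_nhds h0 h1] with y hy
    unfold artanh
    rw [Real.log_div (by linarith [hy.1] : (1:ℝ) + y ≠ 0) (by have := hy.2; intro h; nlinarith : (1:ℝ) - y ≠ 0)]
  have := hg.congr_of_eventuallyEq hev.symm
  refine this.congr_deriv (Eq.symm ?_)
  have hne : (1:ℝ) - x ^ 2 ≠ 0 := by nlinarith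
  have hx1' : (1:ℝ) + x ≠ 0 := ne_of_gt hx1
  have hx2' : (1:ℝ) - x ≠ 0 := ne_of_gt hx2
  field_simp
  ring

lemma hasDerivAt_Lam (α : ℝ) {β : ℝ} (hβ : 0 < β) :
    HasDerivAt (Lam α)
      ((1 - α) ^ (-2 : ℤ) * 2 * Real.exp (-β) *
        (artanh (Real.sqrt (1 - Real.exp (-β))) / Real.sqrt (1 - Real.exp (-β))) *
        (1 - Real.sqrt (1 - Real.exp (-β)) * artanh (Real.sqrt (1 - Real.exp (-β))))) β := by
  set s := Real.sqrt (1 - Real.exp (-β)) with hs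
  have he1 : Real.exp (-β) < 1 := exp_neg_lt_one hβ
  have hepos : 0 < Real.exp (-β) := Real.exp_pos _
  have harg : (0:ℝ) < 1 - Real.exp (-β) := by linarith
  have hspos : 0 < s := Real.sqrt_pos.mpr harg
  have hs2 : s ^ 2 = 1 - Real.exp (-β) := Real.sq_sqrt (le_of_lt harg)
  have hs1 : s < 1 := by
    have := Real.sqrt_lt_sqrt (le_of_lt harg) (show 1 - Real.exp (-β) < 1 by linarith)
    simpa using this
  have hexp : HasDerivAt (fun b : ℝ => Real.exp (-b)) (-Real.exp (-β)) β := by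
    have := (Real.hasDerivAt_exp (-β)).comp β (hasDerivAt_neg β)
    simpa [Function.comp_def] using this
  have harg' : HasDerivAt (fun b : ℝ => 1 - Real.exp (-b)) (Real.exp (-β)) β := by
    simpa using hexp.const_sub 1
  have hsqrt : HasDerivAt (fun b : ℝ => Real.sqrt (1 - Real.exp (-b)))
      (1 / (2 * s) * Real.exp (-β)) β :=
    (Real.hasDerivAt_sqrt (ne_of_gt harg)).comp β harg'
  have hA : HasDerivAt (fun b : ℝ => artanh (Real.sqrt (1 - Real.exp (-b))))
      (1 / (1 - s ^ 2) * (1 / (2 * s) * Real.exp (-β))) β :=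
    HasDerivAt.comp (h₂ := artanh) β (hasDerivAt_artanh (by linarith) hs1) hsqrt
  have heta : HasDerivAt eta (Real.sqrt 2 * (1 / (1 - s ^ 2) * (1 / (2 * s) * Real.exp (-β)))) β :=
    hA.const_mul _
  have hsq : HasDerivAt (fun b : ℝ => (eta b) ^ 2)
      (2 * eta β ^ 1 * (Real.sqrt 2 * (1 / (1 - s ^ 2) * (1 / (2 * s) * Real.exp (-β))))) β :=
    heta.pow 2
  have hmul := (hexp.mul hsq).const_mul ((1 - α) ^ (-2 : ℤ))
  have hLam : Lam α = fun b : ℝ => (1 - α) ^ (-2 : ℤ) * (Real.exp (-b) * (eta b) ^ 2) := by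
    funext b; unfold Lam; ring
  rw [hLam]
  refine hmul.congr_deriv (Eq.symm ?_)
  have h2 : Real.sqrt 2 ^ 2 = 2 := Real.sq_sqrt (by norm_num)
  have heq : eta β = Real.sqrt 2 * artanh s := rfl
  have h1s : (1:ℝ) - s ^ 2 = Real.exp (-β) := by rw [hs2]; ring
  rw [heq, h1s]
  have hsne : s ≠ 0 := ne_of_gt hspos
  have hene : Real.exp (-β) ≠ 0 := ne_of_gt hepos
  have e1 : (Real.sqrt 2 * artanh s) ^ 2 = 2 * artanh s ^ 2 := by rw [mul_pow, h2]
  have e3 : Real.sqrt 2 * Real.sqrt 2 = 2 := Real.mul_self_sqrt (by norm_num)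
  rw [e1, pow_one]
  field_simp
  ring_nf
  rw [h2]

theorem stmt_6 (α : ℝ) (hα : 0 < α ∧ α < 1) (β₁ : ℝ) (hβ₁ : 0 < β₁)
    (hroot : Real.sqrt (1 - Real.exp (-β₁)) * artanh (Real.sqrt (1 - Real.exp (-β₁))) = 1) :
    (∀ β : ℝ, 0 < β → β < β₁ → 0 < deriv (Lam α) β) ∧
    deriv (Lam α) β₁ = 0 ∧
    (∀ β : ℝ, β₁ < β → deriv (Lam α) β < 0) := by
  obtain ⟨hα0, hα1⟩ := hα
  have hc : (0:ℝ) < (1 - α) ^ (-2 : ℤ) := by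
    apply zpow_pos; linarith
  -- basic facts about s
  have hsfacts : ∀ β : ℝ, 0 < β → 0 < Real.sqrt (1 - Real.exp (-β)) ∧
      Real.sqrt (1 - Real.exp (-β)) < 1 := by
    intro β hβ
    have he1 : Real.exp (-β) < 1 := exp_neg_lt_one hβ
    have harg : (0:ℝ) < 1 - Real.exp (-β) := by linarith
    refine ⟨Real.sqrt_pos.mpr harg, ?_⟩
    have := Real.sqrt_lt_sqrt (le_of_lt harg)
      (show 1 - Real.exp (-β) < 1 by linarith [Real.exp_pos (-β)])
    simpa using this
  -- strict monotonicity of g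
  have hgmono : ∀ β β' : ℝ, 0 < β → β < β' →
      Real.sqrt (1 - Real.exp (-β)) * artanh (Real.sqrt (1 - Real.exp (-β))) <
      Real.sqrt (1 - Real.exp (-β')) * artanh (Real.sqrt (1 - Real.exp (-β'))) := by
    intro β β' hβ hββ'
    obtain ⟨hs0, hs1⟩ := hsfacts β hβ
    obtain ⟨hs0', hs1'⟩ := hsfacts β' (by linarith)
    have hss : Real.sqrt (1 - Real.exp (-β)) < Real.sqrt (1 - Real.exp (-β')) := by
      apply Real.sqrt_lt_sqrt (by nlinarith [exp_neg_lt_one hβ])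
      have : Real.exp (-β') < Real.exp (-β) := Real.exp_lt_exp.mpr (by linarith)
      linarith
    have ha := artanh_pos hs0 hs1
    have ha' := artanh_pos hs0' hs1'
    have hmono := artanh_strict (le_of_lt hs0) hss hs1'
    nlinarith
  -- sign helper
  have hsign : ∀ β : ℝ, 0 < β → deriv (Lam α) β =
      (1 - α) ^ (-2 : ℤ) * 2 * Real.exp (-β) *
        (artanh (Real.sqrt (1 - Real.exp (-β))) / Real.sqrt (1 - Real.exp (-β))) *
        (1 - Real.sqrt (1 - Real.exp (-β)) * artanh (Real.sqrt (1 - Real.exp (-β)))) := by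
    intro β hβ
    exact (hasDerivAt_Lam α hβ).deriv
  have hposfac : ∀ β : ℝ, 0 < β → 0 < (1 - α) ^ (-2 : ℤ) * 2 * Real.exp (-β) *
      (artanh (Real.sqrt (1 - Real.exp (-β))) / Real.sqrt (1 - Real.exp (-β))) := by
    intro β hβ
    obtain ⟨hs0, hs1⟩ := hsfacts β hβ
    have ha := artanh_pos hs0 hs1
    have := Real.exp_pos (-β)
    positivity
  refine ⟨?_, ?_, ?_⟩
  · intro β hβ hββ₁
    rw [hsign β hβ]
    have h1 : Real.sqrt (1 - Real.exp (-β)) * artanh (Real.sqrt (1 - Real.exp (-β))) < 1 := by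
      have h := hgmono β β₁ hβ hββ₁
      rw [hroot] at h; exact h
    have := hposfac β hβ
    nlinarith
  · rw [hsign β₁ hβ₁, hroot]
    ring
  · intro β hββ₁
    have hβ : 0 < β := lt_trans hβ₁ hββ₁
    rw [hsign β hβ]
    have h1 : 1 < Real.sqrt (1 - Real.exp (-β)) * artanh (Real.sqrt (1 - Real.exp (-β))) := by
      have h := hgmono β₁ β hβ₁ hββ₁
      rw [hroot] at h; exact h
    have := hposfac β hβ
    nlinarith
end

section
/- Let 0 < α < 1 and λ > 0, with h(x,α) = 0 for |x| < α and 1 for α ≤ |x| ≤ 1. Then the boundary value problem u'' + λ h(x,α) e^u = 0 on (-1,1), u(-1) = u(1) = 0, has at most one positive solution u with ‖u‖_∞ ≤ 1. -/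
open Set Filter Topology

noncomputable def step (α x : ℝ) : ℝ := if |x| < α then 0 else 1

def IsSolution (α lam : ℝ) (u : ℝ → ℝ) : Prop :=
  ContinuousOn u (Icc (-1) 1) ∧
  (∀ x ∈ Ioo (-1 : ℝ) 1, DifferentiableAt ℝ u x) ∧
  ContinuousOn (deriv u) (Icc (-1) 1) ∧
  (∀ x ∈ Ioo (-1 : ℝ) 1 \ {-α, α}, DifferentiableAt ℝ (deriv u) x ∧
    deriv (deriv u) x + lam * step α x * Real.exp (u x) = 0) ∧
  u (-1) = 0 ∧ u 1 = 0

lemma step_nonneg (α x : ℝ) : 0 ≤ step α x := by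
  unfold step; split <;> norm_num

lemma exp_ratio_lemma (s t : ℝ) (hs : 0 < s) (hst : s < t) (ht : t ≤ 1) :
    s * Real.exp t < t * Real.exp s := by
  have hanti : StrictAntiOn (fun x : ℝ => Real.exp x / x) (Ioc 0 1) := by
    apply strictAntiOn_of_deriv_neg (convex_Ioc 0 1)
    · exact Real.continuous_exp.continuousOn.div continuousOn_id
        (fun x hx => ne_of_gt hx.1)
    · intro x hx
      rw [interior_Ioc] at hx
      have hx0 : (x : ℝ) ≠ 0 := ne_of_gt hx.1
      have hd : HasDerivAt (fun x : ℝ => Real.exp x / x)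
          ((Real.exp x * x - Real.exp x * 1) / x ^ 2) x :=
        (Real.hasDerivAt_exp x).div (hasDerivAt_id x) hx0
      rw [hd.deriv]
      apply div_neg_of_neg_of_pos
      · nlinarith [Real.exp_pos x, hx.1, hx.2]
      · positivity
  have h := hanti (Set.mem_Ioc.mpr ⟨hs, le_of_lt (lt_of_lt_of_le hst ht)⟩)
    (Set.mem_Ioc.mpr ⟨hs.trans hst, ht⟩) hst
  simp only at h
  rw [div_lt_div_iff₀ (by linarith) hs] at h
  linarith

set_option maxHeartbeats 2000000 in
lemma key_half (α lam : ℝ) (hα : 0 < α ∧ α < 1) (hlam : 0 < lam) (u v : ℝ → ℝ)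
    (hu : IsSolution α lam u) (hupos : ∀ x ∈ Ioo (-1 : ℝ) 1, 0 < u x)
    (hub : ∀ x ∈ Icc (-1 : ℝ) 1, |u x| ≤ 1)
    (hv : IsSolution α lam v) (hvpos : ∀ x ∈ Ioo (-1 : ℝ) 1, 0 < v x)
    (hvb : ∀ x ∈ Icc (-1 : ℝ) 1, |v x| ≤ 1) :
    ∀ x ∈ Icc (-1 : ℝ) 1, u x ≤ v x := by
  obtain ⟨hα0, hα1⟩ := hα
  obtain ⟨huc, hud, hgc, hueq, huA, huB⟩ := hu
  obtain ⟨hvc, hvd, hkc, hveq, hvA, hvB⟩ := hv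
  by_contra hcon
  push_neg at hcon
  obtain ⟨x₀, hx₀I, hx₀⟩ := hcon
  -- hx₀ : v x₀ < u x₀
  have hwcont : ContinuousOn (fun x => u x - v x) (Icc (-1:ℝ) 1) := huc.sub hvc
  have hx₀Ioo : x₀ ∈ Ioo (-1:ℝ) 1 := by
    rcases hx₀I with ⟨hl, hr⟩
    constructor
    · rcases lt_or_eq_of_le hl with h | h
      · exact h
      · exfalso; rw [← h] at hx₀; rw [huA, hvA] at hx₀; linarith
    · rcases lt_or_eq_of_le hr with h | h
      · exact h
      · exfalso; rw [h] at hx₀; rw [huB, hvB] at hx₀; linarith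
  -- construct a
  have hS₁closed : IsClosed (Icc (-1:ℝ) x₀ ∩ (fun x => u x - v x) ⁻¹' {0}) :=
    (hwcont.mono (Icc_subset_Icc le_rfl hx₀I.2)).preimage_isClosed_of_isClosed
      isClosed_Icc isClosed_singleton
  have hS₁ne : (Icc (-1:ℝ) x₀ ∩ (fun x => u x - v x) ⁻¹' {0}).Nonempty :=
    ⟨-1, ⟨le_rfl, hx₀I.1⟩, by simp [huA, hvA]⟩
  have hS₁bdd : BddAbove (Icc (-1:ℝ) x₀ ∩ (fun x => u x - v x) ⁻¹' {0}) :=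
    BddAbove.mono inter_subset_left bddAbove_Icc
  set a := sSup (Icc (-1:ℝ) x₀ ∩ (fun x => u x - v x) ⁻¹' {0}) with ha_def
  have haS : a ∈ Icc (-1:ℝ) x₀ ∩ (fun x => u x - v x) ⁻¹' {0} :=
    hS₁closed.csSup_mem hS₁ne hS₁bdd
  have ha1 : (-1:ℝ) ≤ a := haS.1.1
  have ha0 : u a = v a := by have := haS.2; simp at this; linarith
  have ha_lt : a < x₀ := by
    rcases lt_or_eq_of_le haS.1.2 with h | h
    · exact h
    · exfalso; rw [h] at ha0; linarith
  have hub_le : ∀ x, x ∈ Icc (-1:ℝ) x₀ ∩ (fun x => u x - v x) ⁻¹' {0} → x ≤ a :=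
    fun x hx => le_csSup hS₁bdd hx
  have hpos₁ : ∀ x, a < x → x ≤ x₀ → v x < u x := by
    intro x hax hxx₀
    by_contra hle
    push_neg at hle
    rcases eq_or_lt_of_le hle with heq | hlt
    · have hxm : x ∈ Icc (-1:ℝ) x₀ ∩ (fun x => u x - v x) ⁻¹' {0} :=
        ⟨⟨by linarith, hxx₀⟩, by simp [heq]⟩
      linarith [hub_le x hxm]
    · have hxlt : x < x₀ := by
        rcases eq_or_lt_of_le hxx₀ with h | h
        · exfalso; rw [h] at hlt; linarith
        · exact h
      have hsub : Icc x x₀ ⊆ Icc (-1:ℝ) 1 :=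
        Icc_subset_Icc (by linarith) hx₀Ioo.2.le
      have hIVT := intermediate_value_Ioo hxlt.le (hwcont.mono hsub)
      have h0 : (0:ℝ) ∈ Ioo (u x - v x) (u x₀ - v x₀) := ⟨by linarith, by linarith⟩
      obtain ⟨z, hz, hz0⟩ := hIVT h0
      have hzm : z ∈ Icc (-1:ℝ) x₀ ∩ (fun x => u x - v x) ⁻¹' {0} :=
        ⟨⟨by linarith [hz.1], hz.2.le⟩, by simp [hz0]⟩
      linarith [hub_le z hzm, hz.1]
  -- construct b
  have hS₂closed : IsClosed (Icc x₀ (1:ℝ) ∩ (fun x => u x - v x) ⁻¹' {0}) :=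
    (hwcont.mono (Icc_subset_Icc hx₀I.1 le_rfl)).preimage_isClosed_of_isClosed
      isClosed_Icc isClosed_singleton
  have hS₂ne : (Icc x₀ (1:ℝ) ∩ (fun x => u x - v x) ⁻¹' {0}).Nonempty :=
    ⟨1, ⟨hx₀I.2, le_rfl⟩, by simp [huB, hvB]⟩
  have hS₂bdd : BddBelow (Icc x₀ (1:ℝ) ∩ (fun x => u x - v x) ⁻¹' {0}) :=
    BddBelow.mono inter_subset_left bddBelow_Icc
  set b := sInf (Icc x₀ (1:ℝ) ∩ (fun x => u x - v x) ⁻¹' {0}) with hb_def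
  have hbS : b ∈ Icc x₀ (1:ℝ) ∩ (fun x => u x - v x) ⁻¹' {0} :=
    hS₂closed.csInf_mem hS₂ne hS₂bdd
  have hb1 : b ≤ 1 := hbS.1.2
  have hb0 : u b = v b := by have := hbS.2; simp at this; linarith
  have hb_gt : x₀ < b := by
    rcases lt_or_eq_of_le hbS.1.1 with h | h
    · exact h
    · exfalso; rw [← h] at hb0; linarith
  have hlb_le : ∀ x, x ∈ Icc x₀ (1:ℝ) ∩ (fun x => u x - v x) ⁻¹' {0} → b ≤ x :=
    fun x hx => csInf_le hS₂bdd hx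
  have hpos₂ : ∀ x, x₀ ≤ x → x < b → v x < u x := by
    intro x hxx₀ hxb
    by_contra hle
    push_neg at hle
    rcases eq_or_lt_of_le hle with heq | hlt
    · have hxm : x ∈ Icc x₀ (1:ℝ) ∩ (fun x => u x - v x) ⁻¹' {0} :=
        ⟨⟨hxx₀, by linarith⟩, by simp [heq]⟩
      linarith [hlb_le x hxm]
    · have hxgt : x₀ < x := by
        rcases eq_or_lt_of_le hxx₀ with h | h
        · exfalso; rw [← h] at hlt; linarith
        · exact h
      have hsub : Icc x₀ x ⊆ Icc (-1:ℝ) 1 :=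
        Icc_subset_Icc hx₀Ioo.1.le (by linarith)
      have hIVT := intermediate_value_Ioo' hxgt.le (hwcont.mono hsub)
      have h0 : (0:ℝ) ∈ Ioo (u x - v x) (u x₀ - v x₀) := ⟨by linarith, by linarith⟩
      obtain ⟨z, hz, hz0⟩ := hIVT h0
      have hzm : z ∈ Icc x₀ (1:ℝ) ∩ (fun x => u x - v x) ⁻¹' {0} :=
        ⟨⟨hz.1.le, by linarith [hz.2]⟩, by simp [hz0]⟩
      linarith [hlb_le z hzm, hz.2]
  have hab : a < b := ha_lt.trans hb_gt
  have hpos : ∀ x ∈ Ioo a b, v x < u x := by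
    intro x hx
    rcases le_or_gt x x₀ with h | h
    · exact hpos₁ x hx.1 h
    · exact hpos₂ x h.le hx.2
  have hIoo : ∀ x ∈ Ioo a b, x ∈ Ioo (-1:ℝ) 1 :=
    fun x hx => ⟨by linarith [hx.1], by linarith [hx.2]⟩
  have hvpos' : ∀ x ∈ Ioo a b, 0 < v x := fun x hx => hvpos x (hIoo x hx)
  have hu1 : ∀ x ∈ Ioo a b, u x ≤ 1 := by
    intro x hx
    have := hub x ⟨(hIoo x hx).1.le, (hIoo x hx).2.le⟩
    exact (abs_le.mp this).2
  have hneg : ∀ x ∈ Ioo a b, v x * Real.exp (u x) - u x * Real.exp (v x) < 0 := by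
    intro x hx
    have := exp_ratio_lemma (v x) (u x) (hvpos' x hx) (hpos x hx) (hu1 x hx)
    linarith
  -- Wronskian derivative
  have hW_hasDeriv : ∀ z ∈ Ioo (-1:ℝ) 1, z ≠ -α → z ≠ α →
      HasDerivAt (fun x => u x * deriv v x - v x * deriv u x)
        (lam * step α z * (v z * Real.exp (u z) - u z * Real.exp (v z))) z := by
    intro z hz hz1 hz2
    have hmem : z ∈ Ioo (-1:ℝ) 1 \ {-α, α} := ⟨hz, by simp [hz1, hz2]⟩
    obtain ⟨hgd, hge⟩ := hueq z hmem
    obtain ⟨hkd, hke⟩ := hveq z hmem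
    have h1 : HasDerivAt u (deriv u z) z := (hud z hz).hasDerivAt
    have h2 : HasDerivAt v (deriv v z) z := (hvd z hz).hasDerivAt
    have h3 : HasDerivAt (deriv u) (deriv (deriv u) z) z := hgd.hasDerivAt
    have h4 : HasDerivAt (deriv v) (deriv (deriv v) z) z := hkd.hasDerivAt
    have h5 := (h1.mul h4).sub (h2.mul h3)
    refine h5.congr_deriv ?_
    have e1 : deriv (deriv u) z = -(lam * step α z * Real.exp (u z)) := by linarith
    have e2 : deriv (deriv v) z = -(lam * step α z * Real.exp (v z)) := by linarith
    rw [e1, e2]; ring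
  -- endpoint derivative signs
  have hfa : 0 ≤ deriv u a - deriv v a := by
    by_contra hn
    push_neg at hn
    have hct : ContinuousWithinAt (fun x => deriv u x - deriv v x) (Icc (-1:ℝ) 1) a :=
      (hgc.sub hkc) a ⟨ha1, by linarith⟩
    have hev : (fun x => deriv u x - deriv v x) ⁻¹' (Iio 0) ∈ 𝓝[Icc (-1:ℝ) 1] a :=
      hct (Iio_mem_nhds hn)
    rw [Metric.mem_nhdsWithin_iff] at hev
    obtain ⟨ε, hε, hball⟩ := hev
    set c := min (a + ε/2) ((a+b)/2) with hc
    have hac : a < c := lt_min (by linarith) (by linarith)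
    have hcb : c < b := lt_of_le_of_lt (min_le_right _ _) (by linarith)
    have hcε : c ≤ a + ε/2 := min_le_left _ _
    have hdiff : DifferentiableOn ℝ (fun x => u x - v x) (Ioo a c) := by
      intro z hz
      have hzab : z ∈ Ioo a b := ⟨hz.1, hz.2.trans hcb⟩
      exact ((hud z (hIoo z hzab)).sub (hvd z (hIoo z hzab))).differentiableWithinAt
    obtain ⟨ξ, hξ, hslope⟩ := exists_deriv_eq_slope (fun x => u x - v x) hac
      (hwcont.mono (Icc_subset_Icc (by linarith) (by linarith))) hdiff
    have hξab : ξ ∈ Ioo a b := ⟨hξ.1, hξ.2.trans hcb⟩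
    have hξd : deriv (fun x => u x - v x) ξ = deriv u ξ - deriv v ξ :=
      deriv_sub (hud ξ (hIoo ξ hξab)) (hvd ξ (hIoo ξ hξab))
    have hξneg : deriv u ξ - deriv v ξ < 0 := by
      have hmem : ξ ∈ Metric.ball a ε ∩ Icc (-1:ℝ) 1 := by
        constructor
        · rw [Metric.mem_ball, Real.dist_eq, abs_of_pos (by linarith [hξ.1] : (0:ℝ) < ξ - a)]
          linarith [hξ.2]
        · exact ⟨by linarith [hξ.1], by linarith [hξ.2]⟩
      have := hball hmem
      simpa using this
    have hwc : 0 < u c - v c := by have := hpos c ⟨hac, hcb⟩; linarith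
    rw [hξd] at hslope

    have hq : 0 < ((u c - v c) - (u a - v a)) / (c - a) := by
      apply div_pos _ (by linarith)
      rw [ha0]; linarith
    rw [hslope] at hξneg
    linarith
  have hfb : deriv u b - deriv v b ≤ 0 := by
    by_contra hn
    push_neg at hn
    have hct : ContinuousWithinAt (fun x => deriv u x - deriv v x) (Icc (-1:ℝ) 1) b :=
      (hgc.sub hkc) b ⟨by linarith, hb1⟩
    have hev : (fun x => deriv u x - deriv v x) ⁻¹' (Ioi 0) ∈ 𝓝[Icc (-1:ℝ) 1] b :=
      hct (Ioi_mem_nhds hn)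
    rw [Metric.mem_nhdsWithin_iff] at hev
    obtain ⟨ε, hε, hball⟩ := hev
    set c := max (b - ε/2) ((a+b)/2) with hc
    have hcb : c < b := max_lt (by linarith) (by linarith)
    have hac : a < c := lt_of_lt_of_le (by linarith) (le_max_right _ _)
    have hcε : b - ε/2 ≤ c := le_max_left _ _
    have hdiff : DifferentiableOn ℝ (fun x => u x - v x) (Ioo c b) := by
      intro z hz
      have hzab : z ∈ Ioo a b := ⟨hac.trans hz.1, hz.2⟩
      exact ((hud z (hIoo z hzab)).sub (hvd z (hIoo z hzab))).differentiableWithinAt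
    obtain ⟨ξ, hξ, hslope⟩ := exists_deriv_eq_slope (fun x => u x - v x) hcb
      (hwcont.mono (Icc_subset_Icc (by linarith) (by linarith))) hdiff
    have hξab : ξ ∈ Ioo a b := ⟨hac.trans hξ.1, hξ.2⟩
    have hξd : deriv (fun x => u x - v x) ξ = deriv u ξ - deriv v ξ :=
      deriv_sub (hud ξ (hIoo ξ hξab)) (hvd ξ (hIoo ξ hξab))
    have hξpos : 0 < deriv u ξ - deriv v ξ := by
      have hmem : ξ ∈ Metric.ball b ε ∩ Icc (-1:ℝ) 1 := by
        constructor
        · rw [Metric.mem_ball, Real.dist_eq, abs_of_neg (by linarith [hξ.2] : ξ - b < 0)]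
          linarith [hξ.1]
        · exact ⟨by linarith [hξ.1], by linarith [hξ.2]⟩
      have := hball hmem
      simpa using this
    have hwc : 0 < u c - v c := by have := hpos c ⟨hac, hcb⟩; linarith
    rw [hξd] at hslope

    have hq : ((u b - v b) - (u c - v c)) / (b - c) < 0 := by
      apply div_neg_of_neg_of_pos _ (by linarith)
      rw [hb0]; linarith
    rw [hslope] at hξpos
    linarith
  have hua : 0 ≤ u a := by
    rcases eq_or_lt_of_le ha1 with h | h
    · rw [← h, huA]
    · exact (hupos a ⟨h, by linarith [hx₀Ioo.2]⟩).le
  have hubb : 0 ≤ u b := by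
    rcases eq_or_lt_of_le hb1 with h | h
    · rw [h, huB]
    · exact (hupos b ⟨by linarith [hx₀Ioo.1], h⟩).le
  have hWa : u a * deriv v a - v a * deriv u a ≤ 0 := by
    rw [← ha0]
    nlinarith [mul_nonneg hua hfa]
  have hWb : 0 ≤ u b * deriv v b - v b * deriv u b := by
    rw [← hb0]
    nlinarith [mul_nonneg hubb (by linarith : (0:ℝ) ≤ deriv v b - deriv u b)]
  -- antitone helper on subintervals avoiding ±α
  have hanti : ∀ s t : ℝ, a ≤ s → s ≤ t → t ≤ b → (∀ z ∈ Ioo s t, z ≠ -α ∧ z ≠ α) →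
      u t * deriv v t - v t * deriv u t ≤ u s * deriv v s - v s * deriv u s := by
    intro s t has hst htb hzs
    have hW : AntitoneOn (fun x => u x * deriv v x - v x * deriv u x) (Icc s t) := by
      apply antitoneOn_of_deriv_nonpos (convex_Icc s t)
      · exact ((huc.mul hkc).sub (hvc.mul hgc)).mono
          (Icc_subset_Icc (by linarith) (by linarith))
      · rw [interior_Icc]
        intro z hz
        have hzab : z ∈ Ioo a b := ⟨lt_of_le_of_lt has hz.1, lt_of_lt_of_le hz.2 htb⟩
        obtain ⟨h1, h2⟩ := hzs z hz
        exact (hW_hasDeriv z (hIoo z hzab) h1 h2).differentiableAt.differentiableWithinAt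
      · rw [interior_Icc]
        intro z hz
        have hzab : z ∈ Ioo a b := ⟨lt_of_le_of_lt has hz.1, lt_of_lt_of_le hz.2 htb⟩
        obtain ⟨h1, h2⟩ := hzs z hz
        rw [(hW_hasDeriv z (hIoo z hzab) h1 h2).deriv]
        have hD := hneg z hzab
        have hs0 := step_nonneg α z
        nlinarith [mul_nonneg hlam.le hs0]
    exact hW ⟨le_rfl, hst⟩ ⟨hst, le_rfl⟩ hst
  -- full antitonicity via clamping at ±α
  have hanti' : ∀ x y, a ≤ x → x ≤ y → y ≤ b →
      u y * deriv v y - v y * deriv u y ≤ u x * deriv v x - v x * deriv u x := by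
    intro x y hax hxy hyb
    set m1 := min (max x (-α)) y with hm1
    set m2 := min (max x α) y with hm2
    have hxm1 : x ≤ m1 := le_min (le_max_left _ _) hxy
    have hm12 : m1 ≤ m2 := min_le_min (max_le_max le_rfl (by linarith)) le_rfl
    have hm2y : m2 ≤ y := min_le_right _ _
    have hc1 : ∀ z ∈ Ioo x m1, z ≠ -α ∧ z ≠ α := by
      intro z hz
      have hzm : z < max x (-α) := lt_of_lt_of_le hz.2 (min_le_left _ _)
      rcases lt_max_iff.mp hzm with h | h
      · exact (lt_asymm h hz.1).elim
      · exact ⟨ne_of_lt h, ne_of_lt (by linarith)⟩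
    have hc2 : ∀ z ∈ Ioo m1 m2, z ≠ -α ∧ z ≠ α := by
      intro z hz
      have hzy : z < y := lt_of_lt_of_le hz.2 hm2y
      rcases min_lt_iff.mp hz.1 with h | h
      · have h1 : -α < z := lt_of_le_of_lt (le_max_right x (-α)) h
        have hzm : z < max x α := lt_of_lt_of_le hz.2 (min_le_left _ _)
        rcases lt_max_iff.mp hzm with h2 | h2
        · exact absurd h2 (not_lt.mpr (le_of_lt (lt_of_le_of_lt (le_max_left x (-α)) h)))
        · exact ⟨ne_of_gt h1, ne_of_lt h2⟩
      · exact (lt_asymm h hzy).elim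
    have hc3 : ∀ z ∈ Ioo m2 y, z ≠ -α ∧ z ≠ α := by
      intro z hz
      rcases min_lt_iff.mp hz.1 with h | h
      · have h1 : α < z := lt_of_le_of_lt (le_max_right x α) h
        exact ⟨ne_of_gt (by linarith), ne_of_gt h1⟩
      · exact (lt_asymm h hz.2).elim
    have h₁ := hanti x m1 hax hxm1 (by linarith) hc1
    have h₂ := hanti m1 m2 (by linarith) hm12 (by linarith) hc2
    have h₃ := hanti m2 y (by linarith) hm2y hyb hc3
    linarith
  have hW0 : ∀ x ∈ Icc a b, u x * deriv v x - v x * deriv u x = 0 := by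
    intro x hx
    have h1 := hanti' a x le_rfl hx.1 hx.2
    have h2 := hanti' x b hx.1 hx.2 le_rfl
    linarith
  -- final contradiction
  rcases lt_or_ge α b with hcase | hcase
  · -- there is a point of (a,b) to the right of α
    set x₁ := (max a α + b)/2 with hx₁def
    have hmaxb : max a α < b := max_lt hab hcase
    have hx₁l : max a α < x₁ := by rw [hx₁def]; linarith
    have hx₁r : x₁ < b := by rw [hx₁def]; linarith
    have hx₁ab : x₁ ∈ Ioo a b := ⟨lt_of_le_of_lt (le_max_left a α) hx₁l, hx₁r⟩
    have hαx₁ : α < x₁ := lt_of_le_of_lt (le_max_right a α) hx₁l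
    have hne1 : x₁ ≠ -α := ne_of_gt (by linarith)
    have hne2 : x₁ ≠ α := ne_of_gt hαx₁
    have hder := hW_hasDeriv x₁ (hIoo x₁ hx₁ab) hne1 hne2
    have hstep : step α x₁ = 1 := by
      unfold step
      rw [if_neg]
      rw [abs_of_pos (by linarith : (0:ℝ) < x₁)]
      linarith
    have heveq : (fun x => u x * deriv v x - v x * deriv u x) =ᶠ[nhds x₁]
        (fun _ => (0:ℝ)) := by
      filter_upwards [Ioo_mem_nhds hx₁ab.1 hx₁ab.2] with z hz
      exact hW0 z ⟨hz.1.le, hz.2.le⟩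
    have hd0 : deriv (fun x => u x * deriv v x - v x * deriv u x) x₁ = 0 := by
      rw [heveq.deriv_eq]; exact deriv_const _ _
    rw [hder.deriv] at hd0
    rw [hstep, mul_one] at hd0
    have hD := hneg x₁ hx₁ab
    nlinarith
  rcases lt_or_ge a (-α) with hcase2 | hcase2
  · -- there is a point of (a,b) to the left of -α
    set x₁ := (a + min b (-α))/2 with hx₁def
    have hamin : a < min b (-α) := lt_min hab hcase2
    have hx₁l : a < x₁ := by rw [hx₁def]; linarith
    have hx₁r : x₁ < min b (-α) := by rw [hx₁def]; linarith
    have hx₁ab : x₁ ∈ Ioo a b := ⟨hx₁l, lt_of_lt_of_le hx₁r (min_le_left _ _)⟩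
    have hx₁α : x₁ < -α := lt_of_lt_of_le hx₁r (min_le_right _ _)
    have hne1 : x₁ ≠ -α := ne_of_lt hx₁α
    have hne2 : x₁ ≠ α := ne_of_lt (by linarith)
    have hder := hW_hasDeriv x₁ (hIoo x₁ hx₁ab) hne1 hne2
    have hstep : step α x₁ = 1 := by
      unfold step
      rw [if_neg]
      rw [abs_of_neg (by linarith : x₁ < 0)]
      linarith
    have heveq : (fun x => u x * deriv v x - v x * deriv u x) =ᶠ[nhds x₁]
        (fun _ => (0:ℝ)) := by
      filter_upwards [Ioo_mem_nhds hx₁ab.1 hx₁ab.2] with z hz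
      exact hW0 z ⟨hz.1.le, hz.2.le⟩
    have hd0 : deriv (fun x => u x * deriv v x - v x * deriv u x) x₁ = 0 := by
      rw [heveq.deriv_eq]; exact deriv_const _ _
    rw [hder.deriv] at hd0
    rw [hstep, mul_one] at hd0
    have hD := hneg x₁ hx₁ab
    nlinarith
  · -- (a,b) ⊆ (-α, α): v/u is constant, contradiction at b
    have hbIoo : b ∈ Ioo (-1:ℝ) 1 := ⟨by linarith [hx₀Ioo.1], by linarith⟩
    have hub_pos : 0 < u b := hupos b hbIoo
    have hux₀pos : 0 < u x₀ := hupos x₀ hx₀Ioo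
    have huposIcc : ∀ x ∈ Icc x₀ b, 0 < u x := by
      intro x hx
      rcases eq_or_lt_of_le hx.2 with h | h
      · rw [h]; exact hub_pos
      · have hxab : x ∈ Ioo a b := ⟨lt_of_lt_of_le ha_lt hx.1, h⟩
        linarith [hpos x hxab, hvpos' x hxab]
    have hφderiv : ∀ z ∈ Ioo x₀ b, HasDerivAt (fun x => v x / u x) 0 z := by
      intro z hz
      have hzab : z ∈ Ioo a b := ⟨ha_lt.trans hz.1, hz.2⟩
      have h1 : HasDerivAt v (deriv v z) z := (hvd z (hIoo z hzab)).hasDerivAt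
      have h2 : HasDerivAt u (deriv u z) z := (hud z (hIoo z hzab)).hasDerivAt
      have hu0 : u z ≠ 0 := ne_of_gt (huposIcc z ⟨hz.1.le, hz.2.le⟩)
      have h3 := h1.div h2 hu0
      refine h3.congr_deriv ?_
      have hW := hW0 z ⟨hzab.1.le, hzab.2.le⟩
      field_simp
      linarith
    have hsub : Icc x₀ b ⊆ Icc (-1:ℝ) 1 := Icc_subset_Icc hx₀Ioo.1.le hb1
    have hcont' : ContinuousOn (fun x => v x / u x) (Icc x₀ b) :=
      (hvc.mono hsub).div (huc.mono hsub) (fun x hx => ne_of_gt (huposIcc x hx))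
    have hdiff' : DifferentiableOn ℝ (fun x => v x / u x) (interior (Icc x₀ b)) := by
      rw [interior_Icc]
      intro z hz
      exact (hφderiv z hz).differentiableAt.differentiableWithinAt
    have hmono := monotoneOn_of_deriv_nonneg (convex_Icc x₀ b) hcont' hdiff' (by
      rw [interior_Icc]
      intro z hz
      rw [(hφderiv z hz).deriv])
    have hanti2 := antitoneOn_of_deriv_nonpos (convex_Icc x₀ b) hcont' hdiff' (by
      rw [interior_Icc]
      intro z hz
      rw [(hφderiv z hz).deriv])
    have hx₀m : x₀ ∈ Icc x₀ b := ⟨le_rfl, hb_gt.le⟩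
    have hbm : b ∈ Icc x₀ b := ⟨hb_gt.le, le_rfl⟩
    have h1 := hmono hx₀m hbm hb_gt.le
    have h2 := hanti2 hx₀m hbm hb_gt.le
    have heq : v x₀ / u x₀ = v b / u b := le_antisymm h1 h2
    have hb1' : v b / u b = 1 := by
      rw [← hb0]; exact div_self (ne_of_gt hub_pos)
    rw [hb1'] at heq
    rw [div_eq_one_iff_eq (ne_of_gt hux₀pos)] at heq
    linarith

theorem stmt_14 (α lam : ℝ) (hα : 0 < α ∧ α < 1) (hlam : 0 < lam) (u v : ℝ → ℝ)
    (hu : IsSolution α lam u) (hupos : ∀ x ∈ Ioo (-1 : ℝ) 1, 0 < u x)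
    (hub : ∀ x ∈ Icc (-1 : ℝ) 1, |u x| ≤ 1)
    (hv : IsSolution α lam v) (hvpos : ∀ x ∈ Ioo (-1 : ℝ) 1, 0 < v x)
    (hvb : ∀ x ∈ Icc (-1 : ℝ) 1, |v x| ≤ 1) :
    ∀ x ∈ Icc (-1 : ℝ) 1, u x = v x := by
  intro x hx
  exact le_antisymm (key_half α lam hα hlam u v hu hupos hub hv hvpos hvb x hx)
    (key_half α lam hα hlam v u hv hvpos hvb hu hupos hub x hx)
end
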